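/- Let a, b be real numbers with b > 0 and a·b ≥ 1/4. Then for all natural numbers k ≥ 1 and l ≥ 1, the ratio b·D(k + l) / (b·D(l))^(2^k) satisfies the bilateral bound 1 ≤ b·D(k + l) / (b·D(l))^(2^k) ≤ (1 + a/(b·D(l)²))^(2^k − 1). -/

import Mathlib

theorem stmt_4 (a b : ℝ) (hb : 0 < b) (hab : a * b ≥ 1/4)
    (D : ℕ → ℝ) (hD0 : D 0 = 1) (hD : ∀ n, D (n + 1) = a + b * D n ^ 2) :
    ∀ k l : ℕ, 1 ≤ k → 1 ≤ l →
      1 ≤ b * D (k + l) / (b * D l) ^ (2 ^ k) ∧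
      b * D (k + l) / (b * D l) ^ (2 ^ k) ≤ (1 + a / (b * D l ^ 2)) ^ (2 ^ k - 1) := by
  have ha : 0 < a := by nlinarith
  have hDpos : ∀ n, 0 < D n := by
    intro n
    induction n with
    | zero => rw [hD0]; norm_num
    | succ n ih => rw [hD]; nlinarith [sq_nonneg (D n)]
  intro k l hk hl
  have hEl : 0 < b * D l := mul_pos hb (hDpos l)
  have hDl := hDpos l
  set c : ℝ := a / (b * D l ^ 2) with hc
  have hc0 : 0 < c := div_pos ha (by positivity)
  have hcE : c * (b * D l) ^ 2 = a * b := by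
    rw [hc]; field_simp
  have hone : 1 ≤ (b * D l) * (1 + c) := by
    have h1 : (b * D l) * (1 + c) = ((b * D l) ^ 2 + a * b) / (b * D l) := by
      field_simp
      nlinarith [hcE]
    rw [h1, le_div_iff₀ hEl]
    nlinarith [sq_nonneg (b * D l - 1/2)]
  have main : ∀ k, 1 ≤ k → (b * D l) ^ (2 ^ k) ≤ b * D (k + l) ∧
      b * D (k + l) ≤ (b * D l) ^ (2 ^ k) * (1 + c) ^ (2 ^ k - 1) := by
    intro k hk
    induction k, hk using Nat.le_induction with
    | base =>
      have h1 : (1 : ℕ) + l = l + 1 := by omega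
      have hval : b * D (1 + l) = a * b + (b * D l) ^ 2 := by
        rw [h1, hD]; ring
      constructor
      · rw [hval]; norm_num; nlinarith
      · rw [hval]
        norm_num
        nlinarith [hcE]
    | succ k hk ih =>
      obtain ⟨ih1, ih2⟩ := ih
      have h2k : 1 ≤ 2 ^ k := Nat.one_le_two_pow
      have hps : (2:ℕ) ^ (k + 1) = 2 * 2 ^ k := by rw [pow_succ]; ring
      have e1 : 2 ^ (k + 1) - 1 = 2 * (2 ^ k - 1) + 1 := by omega
      have e2 : (2:ℕ) ^ (k + 1) = 2 * (2 ^ k - 1) + 2 := by omega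
      have hEkl : 0 < b * D (k + l) := mul_pos hb (hDpos (k + l))
      have hstep : b * D (k + 1 + l) = a * b + (b * D (k + l)) ^ 2 := by
        rw [show k + 1 + l = (k + l) + 1 from by omega, hD]; ring
      set m := 2 ^ k - 1 with hm
      have hpow1 : (1:ℝ) ≤ ((b * D l) * (1 + c)) ^ (2 * m) :=
        one_le_pow₀ hone
      have hsq : (b * D (k + l)) ^ 2 ≤ ((b * D l) ^ (2 ^ k) * (1 + c) ^ m) ^ 2 := by
        apply pow_le_pow_left₀ hEkl.le ih2
      have hsplit : ((b * D l) ^ (2 ^ k) * (1 + c) ^ m) ^ 2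
          = (b * D l) ^ (2 ^ (k + 1)) * (1 + c) ^ (2 * m) := by
        rw [hps, mul_pow, ← pow_mul, ← pow_mul]
        ring_nf
      have key : a * b ≤ (b * D l) ^ (2 ^ (k + 1)) * (1 + c) ^ (2 * m) * c := by
        have hx : (b * D l) ^ (2 ^ (k + 1)) * (1 + c) ^ (2 * m) * c
            = ((b * D l) * (1 + c)) ^ (2 * m) * ((b * D l) ^ 2 * c) := by
          rw [e2, pow_add, mul_pow (b * D l) (1 + c) (2 * m)]; ring
        rw [hx, show (b * D l) ^ 2 * c = a * b from by linarith [hcE]]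
        nlinarith [mul_pos ha hb]
      constructor
      · rw [hstep]
        have : (b * D l) ^ (2 ^ (k + 1)) = ((b * D l) ^ (2 ^ k)) ^ 2 := by
          rw [hps, mul_comm 2 (2^k), pow_mul]
        rw [this]
        have := pow_le_pow_left₀ (pow_nonneg hEl.le (2 ^ k)) ih1 2
        nlinarith [mul_pos ha hb]
      · rw [hstep, e1]
        have hfin : (b * D l) ^ (2 ^ (k + 1)) * (1 + c) ^ (2 * m + 1)
            = (b * D l) ^ (2 ^ (k + 1)) * (1 + c) ^ (2 * m)
              + (b * D l) ^ (2 ^ (k + 1)) * (1 + c) ^ (2 * m) * c := by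
          rw [pow_succ]; ring
        have h3 : (b * D (k + l)) ^ 2 ≤ (b * D l) ^ (2 ^ (k + 1)) * (1 + c) ^ (2 * m) :=
          hsplit ▸ hsq
        rw [hfin]; linarith
  obtain ⟨h1, h2⟩ := main k hk
  have hp : 0 < (b * D l) ^ (2 ^ k) := pow_pos hEl _
  constructor
  · rw [le_div_iff₀ hp]; linarith
  · rw [div_le_iff₀ hp]; linarith [h2, mul_comm ((b * D l) ^ (2 ^ k)) ((1 + c) ^ (2 ^ k - 1))]
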